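/- arXiv:1101.5544 — 2 statements merged into one kernel-verified Lean document; each statement's English description precedes it below -/
import Mathlib

section
/- For every integer n ≥ 1, the operator D(α) satisfies D(α)·Q_n(α) = (α²n² − nα)·Q_n(α), i.e. the one-row Jack function Q_n(α) is an eigenvector of D(α) with eigenvalue α²n² − nα. -/
open scoped BigOperators Classical
open MvPolynomial

noncomputable section JackPaper

/-- The base field `F = ℚ(α)`, rational functions over `ℚ`. -/
abbrev F : Type := RatFunc ℚ

/-- The parameter `α`, an indeterminate of `F = ℚ(α)`. -/
noncomputable def al : F := RatFunc.X

/-- The ring of symmetric functions `Λ_F = F[p₁, p₂, …]`, realized as the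
polynomial ring over `F` in countably many variables `p_k`, `k ≥ 1`. -/
abbrev SymF : Type := MvPolynomial ℕ+ F

/-- The power sum `p_k` (with the convention `p_0 = 1`, never used for partitions). -/
noncomputable def pvar (k : ℕ) : SymF :=
  if h : 0 < k then MvPolynomial.X (⟨k, h⟩ : ℕ+) else 1

/-- The partial derivative `∂/∂p_k` as a linear map on `Λ_F`. -/
noncomputable def pdiff (k : ℕ) : SymF →ₗ[F] SymF :=
  if h : 0 < k then (MvPolynomial.pderiv (⟨k, h⟩ : ℕ+)).toLinearMap else 0

/-- The weight function giving `p_k` degree `k`. -/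
def wfun : ℕ+ → ℕ := fun k => (k : ℕ)

/-- The (weighted) degree of a symmetric function. -/
def wdeg (f : SymF) : ℕ := f.support.sup fun d => d.sum fun k e => (k : ℕ) * e

/-- The Laplace–Beltrami type operator
`D(α) = Σ_{i,j≥1} (i+j)α p_i p_j ∂/∂p_{i+j} + Σ_{i,j≥1} ij α² p_{i+j} ∂²/(∂p_i∂p_j)
  + α(α−1) Σ_{k≥1} k² p_k ∂/∂p_k`.
The sums are locally finite: on a fixed `f` all terms with index beyond `wdeg f` vanish,
so the truncated sum below is the honest value of the infinite sum. -/
noncomputable def Dop (f : SymF) : SymF :=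
  (∑ i ∈ Finset.Icc 1 (wdeg f), ∑ j ∈ Finset.Icc 1 (wdeg f),
    (((((i : ℕ) + j : ℕ) : F) * al) • (pvar i * pvar j * pdiff (i + j) f)
      + ((((i * j : ℕ) : F) * al ^ 2) • (pvar (i + j) * pdiff i (pdiff j f)))))
  + (al * (al - 1)) • ∑ k ∈ Finset.Icc 1 (wdeg f), ((k : F) ^ 2) • (pvar k * pdiff k f)

/-- The parts of a partition sorted in decreasing order: `λ₁ ≥ λ₂ ≥ ⋯`. -/
def sparts {n : ℕ} (l : n.Partition) : List ℕ := l.parts.sort (· ≥ ·)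

/-- The length `ℓ(λ)`, the number of (nonzero) parts. -/
def len {n : ℕ} (l : n.Partition) : ℕ := Multiset.card l.parts

/-- Partial sum `λ₁ + ⋯ + λ_i`. -/
def psumTo {n : ℕ} (l : n.Partition) (i : ℕ) : ℕ := ((sparts l).take i).sum

/-- Dominance order: `domLE μ λ` means `μ ≤ λ`. -/
def domLE {n : ℕ} (μ l : n.Partition) : Prop := ∀ i, psumTo μ i ≤ psumTo l i

/-- Reverse lexicographic order: `revLexLT μ λ` means `μ <^L λ`. -/
def revLexLT {n : ℕ} (μ l : n.Partition) : Prop := List.Lex (· < ·) (sparts μ) (sparts l)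

/-- `m(λ)! = m₁! m₂! ⋯`, the product of factorials of multiplicities. -/
def mfact (m : Multiset ℕ) : ℕ := ∏ k ∈ m.toFinset, (m.count k).factorial

/-- `z_λ = ∏_i i^{m_i} m_i!`. -/
def zee (m : Multiset ℕ) : ℕ := m.prod * mfact m

/-- `p_λ = p_{λ₁} ⋯ p_{λ_ℓ}`. -/
noncomputable def pProd (m : Multiset ℕ) : SymF := (m.map pvar).prod

/-- One-row symmetric function `Q_n(t) = Σ_{λ⊢n} t^{-ℓ(λ)} z_λ⁻¹ p_λ` with parameter `t`. -/
noncomputable def QrowT (t : F) (n : ℕ) : SymF :=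
  ∑ l : n.Partition, ((t ^ len l)⁻¹ * ((zee l.parts : F))⁻¹) • pProd l.parts

/-- The one-row Jack function `Q_n(α)`. -/
noncomputable def Qrow : ℕ → SymF := QrowT al

/-- `Q_n(α)` for integer index, with `Q_n = 0` for `n < 0`. -/
noncomputable def QrowZ (n : ℤ) : SymF := if 0 ≤ n then Qrow n.toNat else 0

/-- Generalized homogeneous symmetric function `q_λ(α) = Q_{λ₁}(α) ⋯ Q_{λ_ℓ}(α)`. -/
noncomputable def qgen (m : Multiset ℕ) : SymF := (m.map Qrow).prod

/-- The value `⟨p_λ, p_λ⟩ = z_λ t^{ℓ(λ)}` read off from the exponent of a monomial in the `p`'s. -/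
noncomputable def zex (t : F) (d : ℕ+ →₀ ℕ) : F :=
  (∏ k ∈ d.support, ((k : ℕ) : F) ^ d k * ((d k).factorial : F)) * t ^ (∑ k ∈ d.support, d k)

/-- The inner product with parameter `t` making `⟨p_λ, p_μ⟩ = δ_{λμ} t^{ℓ(λ)} z_λ`. -/
noncomputable def jipT (t : F) (f g : SymF) : F :=
  ∑ d ∈ f.support, f.coeff d * g.coeff d * zex t d

/-- The Jack inner product: `⟨p_λ, p_μ⟩ = δ_{λμ} α^{ℓ(λ)} z_λ`. -/
noncomputable def jip : SymF → SymF → F := jipT al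

/-- The monomial symmetric function `m_λ`, expressed in the power sums via Möbius
inversion over set partitions of the `ℓ(λ)` parts:
`m_λ = m(λ)!⁻¹ Σ_π (∏_{B∈π} (−1)^{|B|−1}(|B|−1)!) p_{λ_π}`. -/
noncomputable def msym {n : ℕ} (l : n.Partition) : SymF :=
  ((mfact l.parts : F))⁻¹ •
    ∑ P : Finpartition (Finset.univ : Finset (Fin (len l))),
      (∏ B ∈ P.parts, ((-1 : F) ^ (B.card - 1) * ((B.card - 1).factorial : F))) •
        pProd (P.parts.val.map fun B : Finset (Fin (len l)) => ∑ i ∈ B, (sparts l).getD (i : ℕ) 0)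

/-- Strict dominance `μ < λ`. -/
def sdomLT {n : ℕ} (μ l : n.Partition) : Prop := domLE μ l ∧ μ ≠ l

/-- A family `(f λ)_λ` of symmetric functions indexed by partitions of `n` is the family of
Jack functions if each `f λ = m_λ + (lower order terms in dominance order)` and the family
is pairwise orthogonal for the Jack inner product. -/
def IsJackFamily {n : ℕ} (f : n.Partition → SymF) : Prop :=
  (∀ l, ∃ c : n.Partition → F,
    f l = msym l + ∑ μ ∈ Finset.univ.filter fun μ => sdomLT μ l, c μ • msym μ) ∧
  ∀ l μ, l ≠ μ → jip (f l) (f μ) = 0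

/-- The Jack symmetric function `P_λ(α)`. -/
noncomputable def Pjack {n : ℕ} (l : n.Partition) : SymF :=
  if h : ∃! f : n.Partition → SymF, IsJackFamily f then h.choose l else 0

/-- The dual Jack function `Q_λ(α) = ⟨P_λ, P_λ⟩⁻¹ P_λ(α)`. -/
noncomputable def Qjack {n : ℕ} (l : n.Partition) : SymF :=
  (jip (Pjack l) (Pjack l))⁻¹ • Pjack l

/-- `λ'_c`, the number of parts of `λ` that are `≥ c`. -/
def conjLen {n : ℕ} (l : n.Partition) (c : ℕ) : ℕ :=
  Multiset.card (l.parts.filter fun a => c ≤ a)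

/-- The lower hook product `h_*^λ(λ) = ∏_{s∈λ} (α(λ_i − j) + (λ'_j − i + 1))`. -/
noncomputable def lowerHookProd {n : ℕ} (l : n.Partition) : F :=
  ∏ i ∈ Finset.range (len l), ∏ j ∈ Finset.range ((sparts l).getD i 0),
    (al * (((sparts l).getD i 0 : F) - ((j : F) + 1)) + ((conjLen l (j + 1) : F) - (i : F)))

/-- The Jack function `J_λ(α) = h_*^λ(λ) P_λ(α)`. -/
noncomputable def Jjack {n : ℕ} (l : n.Partition) : SymF := lowerHookProd l • Pjack l

/-- `Σ_i λ_i²`. -/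
def sqSum {n : ℕ} (l : n.Partition) : ℕ := (l.parts.map fun a => a * a).sum

/-- `Σ_i i·λ_i` (with `i` running from 1 to `ℓ(λ)`). -/
def iSum {n : ℕ} (l : n.Partition) : ℕ :=
  ((sparts l).zipIdx.map fun x => (x.2 + 1) * x.1).sum

/-- The eigenvalue `e_λ(α) = α² Σ λ_i² + α(|λ| − 2 Σ i λ_i)`. -/
noncomputable def eig {n : ℕ} (l : n.Partition) : F :=
  al ^ 2 * (sqSum l : F) + al * ((n : F) - 2 * (iSum l : F))

/-- The eigenvalue `e'_λ(α) = (α/2) Σ λ_i² − Σ i λ_i`. -/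
noncomputable def eig' {n : ℕ} (l : n.Partition) : F :=
  al * (sqSum l : F) / 2 - (iSum l : F)

/-- Result of moving `k` squares from a part `b` to a part `a` (dropping a zero part). -/
def moveUpM (m : Multiset ℕ) (a b k : ℕ) : Multiset ℕ :=
  ((m.erase a).erase b + {a + k}) + (if b - k = 0 then 0 else {b - k})

/-- `μ` is obtained from `λ` by the moving up operator `r_j^i(k)` acting on parts with
values `a = λ_i ≥ b = λ_j` (`i < j`). -/
def IsMoveAt {n : ℕ} (l μ : n.Partition) (a b k : ℕ) : Prop :=
  b ≤ a ∧ a ∈ l.parts ∧ b ∈ l.parts.erase a ∧ 0 < k ∧ k ≤ b ∧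
    μ.parts = moveUpM l.parts a b k

/-- `μ ∈ M^*(λ)`: `μ` is a moving up of `λ`. -/
def IsMoveUp {n : ℕ} (l μ : n.Partition) : Prop := ∃ a b k, IsMoveAt l μ a b k

/-- The coefficient `(1+δ_{λ_i λ_j})⁻¹ m_{λ_i}(λ)(m_{λ_j}(λ) − δ_{λ_i λ_j})(λ_i − λ_j + 2k)`. -/
noncomputable def rexpr (m : Multiset ℕ) (a b k : ℕ) : F :=
  (if a = b then (2 : F)⁻¹ else 1) * (m.count a : F) *
    ((m.count b : F) - if a = b then 1 else 0) * ((a : F) - (b : F) + 2 * (k : F))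

/-- The matrix coefficients `r_{λμ}` of Lemma 5.6: `r_{λλ} = e'_λ(α)`,
`r_{λμ} = (1+δ)⁻¹ m_{λ_i}(λ)(m_{λ_j}(λ)−δ)(λ_i−λ_j+2k)` if `μ = r_j^i(k)·λ`, and `0` otherwise. -/
noncomputable def rcoef {n : ℕ} (l μ : n.Partition) : F :=
  if l = μ then eig' l
  else ∑ a ∈ Finset.range (n + 1), ∑ b ∈ Finset.range (n + 1), ∑ k ∈ Finset.Icc 1 n,
    if IsMoveAt l μ a b k then rexpr l.parts a b k else 0

/-- The operator `D'(α) = (2α)⁻¹ D(α) − Σ_{k≥1} kα p_k ∂/∂p_k`. -/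
noncomputable def D'op (f : SymF) : SymF :=
  (2 * al)⁻¹ • Dop f - ∑ k ∈ Finset.Icc 1 (wdeg f), ((k : F) * al) • (pvar k * pdiff k f)

/-- `M_r = Σ_{i≥1} h_{−i} h_{i+r}` (again a locally finite sum). -/
noncomputable def Mop (r : ℕ) (f : SymF) : SymF :=
  ∑ i ∈ Finset.Icc 1 (wdeg f), pvar i * ((((i + r : ℕ) : F) * al) • pdiff (i + r) f)

/-- The operator `∏_k h_k^{d_k}` with `h_k = kα ∂/∂p_k`, for an exponent `d`
(the iterated partial derivatives commute, so the order of application is immaterial). -/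
noncomputable def hAnnPow (d : ℕ+ →₀ ℕ) (f : SymF) : SymF :=
  (∏ k ∈ d.support, (((k : ℕ) : F) * al) ^ d k) •
    (d.support.sort (· ≤ ·)).foldl
      (fun g k => (((MvPolynomial.pderiv k).toLinearMap : Module.End F SymF) ^ d k) g) f

/-- The adjoint, under the Jack inner product, of multiplication by `g`:
replace each `p_k` in `g` by `h_k = kα ∂/∂p_k`. -/
noncomputable def adjMul (g f : SymF) : SymF := ∑ d ∈ g.support, g.coeff d • hAnnPow d f

/-- `f` is a moving up filtration with `s` steps. -/
def IsFilt {n : ℕ} (s : ℕ) (f : Fin (s + 1) → n.Partition) : Prop :=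
  ∀ i : Fin s, IsMoveUp (f i.castSucc) (f i.succ)

/-- `f^λ(δ) = ∏_i r_{λ^i λ^{i+1}} / (e'_λ − e'_{λ^i})`. -/
noncomputable def fTop {n : ℕ} (lam : n.Partition) (s : ℕ) (f : Fin (s + 1) → n.Partition) : F :=
  ∏ i : Fin s, rcoef (f i.castSucc) (f i.succ) / (eig' lam - eig' (f i.castSucc))

/-- `f_μ(δ) = ∏_i r_{λ^i λ^{i+1}} / (e'_μ − e'_{λ^{i+1}})`. -/
noncomputable def fBot {n : ℕ} (m : n.Partition) (s : ℕ) (f : Fin (s + 1) → n.Partition) : F :=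
  ∏ i : Fin s, rcoef (f i.castSucc) (f i.succ) / (eig' m - eig' (f i.succ))

/-- The two-row partition `(a, b)` (as a partition of `N = a + b`). -/
def twoRowP (N a b : ℕ) (h : a + b = N) : N.Partition :=
  Nat.Partition.ofSums N {a, b} (by simpa using h)


lemma al_ne : al ≠ 0 := RatFunc.X_ne_zero

lemma pvar_pos (k : ℕ) (h : 0 < k) : pvar k = MvPolynomial.X (⟨k, h⟩ : ℕ+) := by
  unfold pvar; exact dif_pos h

lemma pdiff_pos (k : ℕ) (h : 0 < k) (f : SymF) :
    pdiff k f = MvPolynomial.pderiv (⟨k, h⟩ : ℕ+) f := by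
  have : pdiff k = (MvPolynomial.pderiv (⟨k, h⟩ : ℕ+)).toLinearMap := dif_pos h
  rw [this]; rfl

lemma pdiff_pvar (k a : ℕ) (hk : 0 < k) (ha : 0 < a) :
    pdiff k (pvar a) = if a = k then 1 else 0 := by
  rw [pdiff_pos k hk, pvar_pos a ha, pderiv_X]
  by_cases h : a = k
  · subst h; simp [Pi.single_apply]; rfl
  · have : (⟨a, ha⟩ : ℕ+) ≠ ⟨k, hk⟩ := by simp [h]
    simp [Pi.single_apply, this, h]; rfl

lemma pProd_cons (a : ℕ) (m : Multiset ℕ) : pProd (a ::ₘ m) = pvar a * pProd m := by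
  simp [pProd]

lemma pdiff_mul (k : ℕ) (hk : 0 < k) (f g : SymF) :
    pdiff k (f * g) = f * pdiff k g + (pdiff k f) * g := by
  rw [pdiff_pos k hk, pdiff_pos k hk, pdiff_pos k hk]
  erw [Derivation.leibniz, smul_eq_mul, smul_eq_mul, mul_comm g]; rfl

lemma pdiff_pProd (k : ℕ) (hk : 0 < k) (m : Multiset ℕ) (hm : ∀ a ∈ m, 0 < a) :
    pdiff k (pProd m) = (m.count k : F) • pProd (m.erase k) := by
  induction m using Multiset.induction_on with
  | empty => simp [pProd, pdiff_pos k hk]; exact (MvPolynomial.pderiv (⟨k, hk⟩ : ℕ+)).map_one_eq_zero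
  | cons a m ih =>
    have ha : 0 < a := hm a (Multiset.mem_cons_self a m)
    have hm' : ∀ x ∈ m, 0 < x := fun x hx => hm x (Multiset.mem_cons_of_mem hx)
    rw [pProd_cons, pdiff_mul k hk, ih hm', pdiff_pvar k a hk ha]
    by_cases h : a = k
    · subst h
      rw [Multiset.erase_cons_head, Multiset.count_cons_self]
      by_cases hc : a ∈ m
      · have : pvar a * pProd (m.erase a) = pProd m := by
          rw [← pProd_cons, Multiset.cons_erase hc]
        push_cast
        rw [mul_smul_comm, this]
        simp [add_smul, add_comm]
      · have : m.count a = 0 := Multiset.count_eq_zero_of_notMem hc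
        simp [this]
    · rw [Multiset.erase_cons_tail m (fun hh => h hh),
        Multiset.count_cons_of_ne (fun hh => h hh.symm), pProd_cons]
      simp [mul_smul_comm, h]

lemma mfact_cons (a : ℕ) (m : Multiset ℕ) :
    mfact (a ::ₘ m) = (m.count a + 1) * mfact m := by
  unfold mfact
  rw [Multiset.toFinset_cons]
  by_cases h : a ∈ m.toFinset
  · rw [Finset.insert_eq_self.2 h]
    rw [← Finset.mul_prod_erase _ _ h, ← Finset.mul_prod_erase _ _ h,
      Multiset.count_cons_self, Nat.factorial_succ, mul_assoc]
    congr 1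
    refine congrArg _ (Finset.prod_congr rfl ?_)
    intro x hx
    rw [Multiset.count_cons_of_ne (Finset.ne_of_mem_erase hx)]
  · rw [Finset.prod_insert h]
    have hc : m.count a = 0 := by
      rwa [Multiset.count_eq_zero, ← Multiset.mem_toFinset]
    rw [Multiset.count_cons_self, hc]
    simp only [Nat.factorial_one, zero_add, one_mul]
    apply Finset.prod_congr rfl
    intro x hx
    rw [Multiset.count_cons_of_ne]
    intro hxa; rw [hxa] at hx; exact h hx

lemma zee_cons (a : ℕ) (m : Multiset ℕ) :
    zee (a ::ₘ m) = a * (m.count a + 1) * zee m := by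
  unfold zee
  rw [Multiset.prod_cons, mfact_cons]
  ring

lemma mfact_pos (m : Multiset ℕ) : 0 < mfact m :=
  Finset.prod_pos fun _ _ => Nat.factorial_pos _

lemma zee_pos (m : Multiset ℕ) (hm : ∀ a ∈ m, 0 < a) : 0 < zee m :=
  mul_pos (Multiset.prod_pos hm) (mfact_pos m)

/-- Partition of `n` obtained by adding a part `k` to a partition of `n - k`. -/
def insPart {n k : ℕ} (hk : 0 < k) (hkn : k ≤ n) (μ : (n - k).Partition) : n.Partition where
  parts := k ::ₘ μ.parts
  parts_pos := by
    intro i hi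
    rcases Multiset.mem_cons.1 hi with h | h
    · exact h ▸ hk
    · exact μ.parts_pos h
  parts_sum := by rw [Multiset.sum_cons, μ.parts_sum]; omega

/-- Partition of `n - k` obtained by removing a part `k`. -/
def delPart {n k : ℕ} (l : n.Partition) (hmem : k ∈ l.parts) : (n - k).Partition where
  parts := l.parts.erase k
  parts_pos := fun h => l.parts_pos (Multiset.mem_of_mem_erase h)
  parts_sum := by
    have := Multiset.cons_erase hmem
    have h2 : (k ::ₘ l.parts.erase k).sum = n := by rw [this, l.parts_sum]
    rw [Multiset.sum_cons] at h2
    omega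

lemma part_le {n : ℕ} (l : n.Partition) {a : ℕ} (ha : a ∈ l.parts) : a ≤ n :=
  l.parts_sum ▸ Multiset.single_le_sum (fun x _ => Nat.zero_le x) a ha

lemma pdiff_Qrow_zero {k n : ℕ} (h : n < k) : pdiff k (Qrow n) = 0 := by
  have hk : 0 < k := Nat.lt_of_le_of_lt (Nat.zero_le n) h
  unfold Qrow QrowT
  rw [map_sum]
  apply Finset.sum_eq_zero
  intro l _
  rw [map_smul, pdiff_pProd k hk l.parts (fun a ha => l.parts_pos ha)]
  have : l.parts.count k = 0 := by
    rw [Multiset.count_eq_zero]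
    intro hc
    exact absurd (part_le l hc) (by omega)
  simp [this]

instance : CharZero F := charZero_of_injective_algebraMap (algebraMap ℚ F).injective

lemma coeff_eq {k : ℕ} (hk : 0 < k) (e : Multiset ℕ) (he : ∀ a ∈ e, 0 < a) :
    ((al ^ (Multiset.card e + 1))⁻¹ * ((zee (k ::ₘ e) : F))⁻¹) * ((e.count k + 1 : ℕ) : F)
      = ((k : F) * al)⁻¹ * ((al ^ Multiset.card e)⁻¹ * ((zee e : F))⁻¹) := by
  rw [zee_cons]
  have h1 : (al : F) ≠ 0 := al_ne
  have h2 : ((k : F)) ≠ 0 := Nat.cast_ne_zero.2 hk.ne'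
  have h3 : ((e.count k + 1 : ℕ) : F) ≠ 0 := Nat.cast_ne_zero.2 (Nat.succ_ne_zero _)
  have h4 : ((zee e : ℕ) : F) ≠ 0 := Nat.cast_ne_zero.2 (zee_pos e he).ne'
  have h3' : ((Multiset.count k e : F) + 1) ≠ 0 := by
    intro h
    apply h3; push_cast; exact h
  push_cast
  field_simp
  ring


lemma pdiff_Qrow {k n : ℕ} (hk : 1 ≤ k) (hkn : k ≤ n) :
    pdiff k (Qrow n) = ((k : F) * al)⁻¹ • Qrow (n - k) := by
  unfold Qrow QrowT
  rw [map_sum, Finset.smul_sum]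
  rw [show (∑ l : n.Partition, pdiff k (((al ^ len l)⁻¹ * ((zee l.parts : F))⁻¹) • pProd l.parts))
    = ∑ l ∈ Finset.univ.filter (fun l : n.Partition => k ∈ l.parts),
      pdiff k (((al ^ len l)⁻¹ * ((zee l.parts : F))⁻¹) • pProd l.parts) from ?_]
  · refine Finset.sum_bij' (fun l hl => delPart l (by simpa using (Finset.mem_filter.1 hl).2))
      (fun μ _ => insPart hk hkn μ) ?_ ?_ ?_ ?_ ?_
    · intro a ha; exact Finset.mem_univ _
    · intro μ _
      simp only [Finset.mem_filter, Finset.mem_univ, true_and]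
      exact Multiset.mem_cons_self k _
    · intro l hl
      have hmem : k ∈ l.parts := by simpa using (Finset.mem_filter.1 hl).2
      apply Nat.Partition.ext
      show k ::ₘ l.parts.erase k = l.parts
      exact Multiset.cons_erase hmem
    · intro μ _
      apply Nat.Partition.ext
      show (k ::ₘ μ.parts).erase k = μ.parts
      exact Multiset.erase_cons_head k μ.parts
    · intro l hl
      have hmem : k ∈ l.parts := by simpa using (Finset.mem_filter.1 hl).2
      rw [map_smul, pdiff_pProd k hk l.parts (fun a ha => l.parts_pos ha)]
      rw [smul_smul, smul_smul]
      have hparts : l.parts = k ::ₘ l.parts.erase k := (Multiset.cons_erase hmem).symm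
      have he : ∀ a ∈ l.parts.erase k, 0 < a := fun a ha => l.parts_pos (Multiset.mem_of_mem_erase ha)
      have hlen : len l = Multiset.card (l.parts.erase k) + 1 := by
        unfold len; rw [hparts]; simp
      have hcount : l.parts.count k = (l.parts.erase k).count k + 1 := by
        conv_lhs => rw [hparts]
        rw [Multiset.count_cons_self]
      have goal1 : (al ^ len l)⁻¹ * ((zee l.parts : F))⁻¹ * (l.parts.count k : F)
          = ((k : F) * al)⁻¹ * ((al ^ Multiset.card (l.parts.erase k))⁻¹
            * ((zee (l.parts.erase k) : F))⁻¹) := by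
        rw [hlen, hcount]
        rw [show zee l.parts = zee (k ::ₘ l.parts.erase k) from by rw [← hparts]]
        exact coeff_eq hk (l.parts.erase k) he
      rw [goal1]
      rfl
  · symm
    apply Finset.sum_subset (Finset.subset_univ _)
    intro l _ hl
    have hmem : k ∉ l.parts := by simpa using hl
    rw [map_smul, pdiff_pProd k hk l.parts (fun a ha => l.parts_pos ha),
      Multiset.count_eq_zero_of_notMem hmem]
    simp

lemma sum_count_mul (s : Finset ℕ) (m : Multiset ℕ) (hs : m.toFinset ⊆ s) :
    ∑ k ∈ s, k * m.count k = m.sum := by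
  induction m using Multiset.induction_on with
  | empty => simp
  | cons a m ih =>
    have hts : m.toFinset ⊆ s := by
      refine subset_trans ?_ hs
      intro x hx
      rw [Multiset.mem_toFinset] at hx ⊢
      exact Multiset.mem_cons_of_mem hx
    have has : a ∈ s := hs (by rw [Multiset.mem_toFinset]; exact Multiset.mem_cons_self a m)
    rw [Multiset.sum_cons, ← ih hts]
    rw [show (a + ∑ k ∈ s, k * m.count k : ℕ) = ∑ k ∈ s, (if k = a then a else 0) + ∑ k ∈ s, k * m.count k from by rw [Finset.sum_ite_eq' s a (fun _ => a)]; simp [has]]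
    rw [← Finset.sum_add_distrib]
    apply Finset.sum_congr rfl
    intro k _
    by_cases h : k = a
    · subst h; rw [Multiset.count_cons_self, if_pos rfl]; ring
    · rw [Multiset.count_cons_of_ne h]; simp [h]

lemma euler_part {n : ℕ} (l : n.Partition) :
    ∑ k ∈ Finset.Icc 1 n, ((k : F)) • (pvar k * pdiff k (pProd l.parts))
      = ((n : F)) • pProd l.parts := by
  have step : ∀ k ∈ Finset.Icc 1 n, ((k : F)) • (pvar k * pdiff k (pProd l.parts))
      = (((k * l.parts.count k : ℕ)) : F) • pProd l.parts := by
    intro k hk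
    have hk1 : 0 < k := by
      rw [Finset.mem_Icc] at hk; omega
    rw [pdiff_pProd k hk1 l.parts (fun a ha => l.parts_pos ha)]
    by_cases h : k ∈ l.parts
    · have : pvar k * pProd (l.parts.erase k) = pProd l.parts := by
        rw [← pProd_cons, Multiset.cons_erase h]
      rw [mul_smul_comm, this, smul_smul]
      push_cast
      ring_nf
    · rw [Multiset.count_eq_zero_of_notMem h]
      simp
  rw [Finset.sum_congr rfl step, ← Finset.sum_smul]
  congr 1
  rw [← Nat.cast_sum]
  congr 1
  rw [sum_count_mul _ _ ?_, l.parts_sum]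
  intro a ha
  rw [Multiset.mem_toFinset] at ha
  rw [Finset.mem_Icc]
  exact ⟨l.parts_pos ha, part_le l ha⟩

lemma euler_Qrow (n : ℕ) :
    ∑ k ∈ Finset.Icc 1 n, ((k : F)) • (pvar k * pdiff k (Qrow n)) = ((n : F)) • Qrow n := by
  unfold Qrow QrowT
  have expand : ∀ k ∈ Finset.Icc 1 n, ((k : F)) • (pvar k * pdiff k
      (∑ l : n.Partition, ((al ^ len l)⁻¹ * ((zee l.parts : F))⁻¹) • pProd l.parts))
      = ∑ l : n.Partition, ((al ^ len l)⁻¹ * ((zee l.parts : F))⁻¹) •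
          (((k : F)) • (pvar k * pdiff k (pProd l.parts))) := by
    intro k _
    rw [map_sum, Finset.mul_sum, Finset.smul_sum]
    apply Finset.sum_congr rfl
    intro l _
    rw [map_smul]
    rw [smul_comm]
    congr 1
    rw [mul_smul_comm]
  rw [Finset.sum_congr rfl expand, Finset.sum_comm]
  rw [Finset.smul_sum]
  apply Finset.sum_congr rfl
  intro l _
  rw [← Finset.smul_sum, euler_part l, smul_comm]

lemma keyB (n : ℕ) :
    ∑ k ∈ Finset.Icc 1 n, pvar k * Qrow (n - k) = (((n : F)) * al) • Qrow n := by
  have E := euler_Qrow n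
  have step : ∀ k ∈ Finset.Icc 1 n, ((k : F)) • (pvar k * pdiff k (Qrow n))
      = al⁻¹ • (pvar k * Qrow (n - k)) := by
    intro k hk
    rw [Finset.mem_Icc] at hk
    rw [pdiff_Qrow hk.1 hk.2, mul_smul_comm, smul_smul]
    congr 1
    have hkne : ((k : F)) ≠ 0 := Nat.cast_ne_zero.2 (by omega)
    rw [mul_inv]
    rw [← mul_assoc, mul_inv_cancel₀ hkne, one_mul]
  rw [Finset.sum_congr rfl step, ← Finset.smul_sum] at E
  have := congrArg (fun x => al • x) E
  rw [smul_smul, mul_inv_cancel₀ al_ne, one_smul, smul_smul] at this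
  rw [this, mul_comm]

def expOf (m : Multiset ℕ) : ℕ+ →₀ ℕ :=
  (m.map fun a => if h : 0 < a then Finsupp.single (⟨a, h⟩ : ℕ+) 1 else 0).sum

lemma expOf_zero : expOf 0 = 0 := by simp [expOf]; rfl

lemma expOf_cons (a : ℕ) (ha : 0 < a) (m : Multiset ℕ) :
    expOf (a ::ₘ m) = (Finsupp.single (⟨a, ha⟩ : ℕ+) 1 : ℕ+ →₀ ℕ) + expOf m := by
  unfold expOf
  rw [Multiset.map_cons, Multiset.sum_cons, dif_pos ha]; rfl

lemma pProd_monomial (m : Multiset ℕ) (hm : ∀ a ∈ m, 0 < a) :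
    pProd m = MvPolynomial.monomial (expOf m) 1 := by
  induction m using Multiset.induction_on with
  | empty => rw [expOf_zero]; simp [pProd]
  | cons a m ih =>
    have ha : 0 < a := hm a (Multiset.mem_cons_self a m)
    rw [pProd_cons, ih (fun x hx => hm x (Multiset.mem_cons_of_mem hx)),
      expOf_cons a ha, pvar_pos a ha]
    erw [MvPolynomial.monomial_single_add, pow_one]; rfl

lemma expOf_weight (m : Multiset ℕ) (hm : ∀ a ∈ m, 0 < a) :
    ((expOf m).sum fun k e => (k : ℕ) * e) = m.sum := by
  induction m using Multiset.induction_on with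
  | empty => rw [expOf_zero]; simp
  | cons a m ih =>
    have ha : 0 < a := hm a (Multiset.mem_cons_self a m)
    rw [expOf_cons a ha, Multiset.sum_cons,
      Finsupp.sum_add_index' (fun k => mul_zero _) (fun k e1 e2 => mul_add _ _ _),
      ih (fun x hx => hm x (Multiset.mem_cons_of_mem hx))]
    simp [Finsupp.sum_single_index]
    erw [Finsupp.sum_single_index] <;> simp

lemma expOf_count (m : Multiset ℕ) (hm : ∀ a ∈ m, 0 < a) (k : ℕ+) :
    expOf m k = m.count (k : ℕ) := by
  induction m using Multiset.induction_on with
  | empty => rw [expOf_zero]; simp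
  | cons a m ih =>
    have ha : 0 < a := hm a (Multiset.mem_cons_self a m)
    rw [expOf_cons a ha, Finsupp.add_apply]
    erw [Finsupp.single_apply]
    rw [ih (fun x hx => hm x (Multiset.mem_cons_of_mem hx))]
    by_cases h : a = (k : ℕ)
    · have : (⟨a, ha⟩ : ℕ+) = k := by
        apply PNat.coe_injective; exact h
      erw [if_pos this]; rw [h, Multiset.count_cons_self]
      omega
    · have : (⟨a, ha⟩ : ℕ+) ≠ k := by
        intro hh; subst hh; exact h rfl
      erw [if_neg this]; rw [Multiset.count_cons_of_ne (fun hh => h hh.symm)]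
      omega

lemma expOf_inj {m m' : Multiset ℕ} (hm : ∀ a ∈ m, 0 < a) (hm' : ∀ a ∈ m', 0 < a)
    (h : expOf m = expOf m') : m = m' := by
  ext a
  by_cases ha : 0 < a
  · have := DFunLike.congr_fun h (⟨a, ha⟩ : ℕ+)
    erw [expOf_count m hm, expOf_count m' hm'] at this; exact this
  · have h0 : a = 0 := by omega
    subst h0
    rw [Multiset.count_eq_zero_of_notMem (fun hc => absurd (hm 0 hc) (lt_irrefl 0)),
      Multiset.count_eq_zero_of_notMem (fun hc => absurd (hm' 0 hc) (lt_irrefl 0))]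

/-- The one-part partition `(n)`. -/
def onePart (n : ℕ) (hn : 1 ≤ n) : n.Partition where
  parts := {n}
  parts_pos := by intro i hi; rw [Multiset.mem_singleton] at hi; omega
  parts_sum := by simp

lemma Qrow_coeff (n : ℕ) (d : ℕ+ →₀ ℕ) :
    MvPolynomial.coeff d (Qrow n)
      = ∑ l : n.Partition, if expOf l.parts = d then ((al ^ len l)⁻¹ * ((zee l.parts : F))⁻¹) else 0 := by
  unfold Qrow QrowT
  rw [MvPolynomial.coeff_sum]
  apply Finset.sum_congr rfl
  intro l _
  rw [pProd_monomial l.parts (fun a ha => l.parts_pos ha), MvPolynomial.smul_monomial,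
    smul_eq_mul, mul_one, MvPolynomial.coeff_monomial]

lemma wdeg_Qrow (n : ℕ) (hn : 1 ≤ n) : wdeg (Qrow n) = n := by
  apply le_antisymm
  · apply Finset.sup_le
    intro d hd
    rw [MvPolynomial.mem_support_iff, Qrow_coeff] at hd
    by_cases he : ∃ l : n.Partition, expOf l.parts = d
    · obtain ⟨l, hl⟩ := he
      rw [← hl, expOf_weight l.parts (fun a ha => l.parts_pos ha), l.parts_sum]
    · exfalso
      apply hd
      apply Finset.sum_eq_zero
      intro l _
      rw [if_neg (fun hc => he ⟨l, hc⟩)]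
  · set l0 := onePart n hn with hl0
    have hmem : expOf l0.parts ∈ (Qrow n).support := by
      rw [MvPolynomial.mem_support_iff, Qrow_coeff]
      rw [Finset.sum_eq_single l0]
      · rw [if_pos rfl]
        apply mul_ne_zero
        · exact inv_ne_zero (pow_ne_zero _ al_ne)
        · exact inv_ne_zero (Nat.cast_ne_zero.2 (zee_pos l0.parts (fun a ha => l0.parts_pos ha)).ne')
      · intro l _ hne
        rw [if_neg]
        intro hc
        apply hne
        apply Nat.Partition.ext
        exact expOf_inj (fun a ha => l.parts_pos ha) (fun a ha => l0.parts_pos ha) hc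
      · intro h
        exact absurd (Finset.mem_univ l0) h
    have := Finset.le_sup (f := fun d : ℕ+ →₀ ℕ => d.sum fun k e => (k : ℕ) * e) hmem
    unfold wdeg
    rwa [expOf_weight l0.parts (fun a ha => l0.parts_pos ha),
      show l0.parts.sum = n from l0.parts_sum] at this


lemma scalar_ne (s : ℕ) (hs : 0 < s) : ((s : F)) * al ≠ 0 :=
  mul_ne_zero (Nat.cast_ne_zero.2 hs.ne') al_ne

set_option maxHeartbeats 2000000 in
theorem statement0' (n : ℕ) (hn : 1 ≤ n) :
    (∑ i ∈ Finset.Icc 1 (wdeg (Qrow n)), ∑ j ∈ Finset.Icc 1 (wdeg (Qrow n)),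
      (((((i : ℕ) + j : ℕ) : F) * al) • (pvar i * pvar j * pdiff (i + j) (Qrow n))
        + ((((i * j : ℕ) : F) * al ^ 2) • (pvar (i + j) * pdiff i (pdiff j (Qrow n))))))
    + (al * (al - 1)) • ∑ k ∈ Finset.Icc 1 (wdeg (Qrow n)), ((k : F) ^ 2) • (pvar k * pdiff k (Qrow n))
    = (al ^ 2 * (n : F) ^ 2 - (n : F) * al) • Qrow n := by
  rw [wdeg_Qrow n hn]
  set I := Finset.Icc 1 n with hI
  set g : ℕ → SymF := fun s => pvar s * Qrow (n - s) with hg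
  -- rewrite the double-sum bracket
  have hbr : ∀ i ∈ I, ∀ j ∈ I,
      ((((i : ℕ) + j : ℕ) : F) * al) • (pvar i * pvar j * pdiff (i + j) (Qrow n))
        + ((((i * j : ℕ) : F) * al ^ 2) • (pvar (i + j) * pdiff i (pdiff j (Qrow n))))
      = (if i + j ≤ n then pvar i * (pvar j * Qrow (n - (i + j))) else 0)
        + (if i + j ≤ n then pvar (i + j) * Qrow (n - (i + j)) else 0) := by
    intro i hi j hj
    rw [hI, Finset.mem_Icc] at hi hj
    by_cases h : i + j ≤ n
    · rw [if_pos h, if_pos h]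
      have e1 : pdiff (i + j) (Qrow n) = (((i + j : ℕ) : F) * al)⁻¹ • Qrow (n - (i + j)) :=
        pdiff_Qrow (by omega) h
      have e2 : pdiff j (Qrow n) = (((j : ℕ) : F) * al)⁻¹ • Qrow (n - j) :=
        pdiff_Qrow (by omega) (by omega)
      have e3 : pdiff i (Qrow (n - j)) = (((i : ℕ) : F) * al)⁻¹ • Qrow (n - j - i) :=
        pdiff_Qrow (by omega) (by omega)
      have e4 : Qrow (n - j - i) = Qrow (n - (i + j)) := by
        congr 1; omega
      rw [e1, e2, map_smul, e3, e4]
      congr 1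
      · rw [mul_smul_comm, smul_smul, mul_inv_cancel₀ (scalar_ne (i + j) (by omega)), one_smul,
          mul_assoc]
      · rw [smul_smul, mul_smul_comm, smul_smul]
        rw [show ((i * j : ℕ) : F) * al ^ 2 * ((((j : ℕ) : F) * al)⁻¹ * ((((i : ℕ)) : F) * al)⁻¹) = 1 from ?_, one_smul]
        have hine : ((i : ℕ) : F) ≠ 0 := Nat.cast_ne_zero.2 (by omega)
        have hjne : ((j : ℕ) : F) ≠ 0 := Nat.cast_ne_zero.2 (by omega)
        push_cast
        field_simp
        exact div_self al_ne
    · rw [if_neg h, if_neg h]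
      have e1 : pdiff (i + j) (Qrow n) = 0 := pdiff_Qrow_zero (by omega)
      have e2 : pdiff j (Qrow n) = (((j : ℕ) : F) * al)⁻¹ • Qrow (n - j) :=
        pdiff_Qrow (by omega) (by omega)
      have e3 : pdiff i (Qrow (n - j)) = 0 := pdiff_Qrow_zero (by omega)
      rw [e1, e2, map_smul, e3]
      simp
  -- the filtered inner range
  have hset : ∀ i ∈ I, I.filter (fun j => i + j ≤ n) = Finset.Icc 1 (n - i) := by
    intro i hi
    rw [hI, Finset.mem_Icc] at hi
    ext j
    simp only [Finset.mem_filter, hI, Finset.mem_Icc]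
    omega
  -- S1
  have S1 : ∑ i ∈ I, ∑ j ∈ I, (if i + j ≤ n then pvar i * (pvar j * Qrow (n - (i + j))) else 0)
      = ∑ s ∈ I, (((n - s : ℕ) : F) * al) • g s := by
    apply Finset.sum_congr rfl
    intro i hi
    have hi' := hi
    rw [hI, Finset.mem_Icc] at hi'
    rw [← Finset.sum_filter, hset i hi]
    have : ∀ j ∈ Finset.Icc 1 (n - i), pvar i * (pvar j * Qrow (n - (i + j)))
        = pvar i * (pvar j * Qrow ((n - i) - j)) := by
      intro j hj
      congr 2
      · congr 1; omega
    rw [Finset.sum_congr rfl this, ← Finset.mul_sum, keyB (n - i), mul_smul_comm]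
  -- S2
  have S2 : ∑ i ∈ I, ∑ j ∈ I, (if i + j ≤ n then pvar (i + j) * Qrow (n - (i + j)) else 0)
      = ∑ s ∈ I, (((s - 1 : ℕ) : F)) • g s := by
    have inner : ∀ i ∈ I, ∑ j ∈ I, (if i + j ≤ n then pvar (i + j) * Qrow (n - (i + j)) else 0)
        = ∑ s ∈ I, (if i + 1 ≤ s then g s else 0) := by
      intro i hi
      have hi' := hi
      rw [hI, Finset.mem_Icc] at hi'
      rw [← Finset.sum_filter, hset i hi]
      have hmap : Finset.Icc (i + 1) n = Finset.map (addLeftEmbedding i) (Finset.Icc 1 (n - i)) := by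
        rw [Finset.map_add_left_Icc]
        congr 1
        omega
      have hset2 : I.filter (fun s => i + 1 ≤ s) = Finset.Icc (i + 1) n := by
        ext s
        simp only [Finset.mem_filter, hI, Finset.mem_Icc]
        omega
      rw [← Finset.sum_filter, hset2, hmap, Finset.sum_map]
      apply Finset.sum_congr rfl
      intro j hj
      rfl
    rw [Finset.sum_congr rfl inner, Finset.sum_comm]
    apply Finset.sum_congr rfl
    intro s hs
    have hs' := hs
    rw [hI, Finset.mem_Icc] at hs'
    rw [← Finset.sum_filter]
    have hset3 : I.filter (fun i => i + 1 ≤ s) = Finset.Icc 1 (s - 1) := by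
      ext i
      simp only [Finset.mem_filter, hI, Finset.mem_Icc]
      omega
    rw [hset3, Finset.sum_const, Nat.card_Icc]
    rw [show s - 1 + 1 - 1 = s - 1 from by omega]
    rw [← Nat.cast_smul_eq_nsmul F]
  -- S3
  have S3 : (al * (al - 1)) • ∑ k ∈ I, ((k : F) ^ 2) • (pvar k * pdiff k (Qrow n))
      = ∑ s ∈ I, (((s : ℕ) : F) * (al - 1)) • g s := by
    rw [Finset.smul_sum]
    apply Finset.sum_congr rfl
    intro k hk
    have hk' := hk
    rw [hI, Finset.mem_Icc] at hk'
    rw [pdiff_Qrow hk'.1 hk'.2, mul_smul_comm, smul_smul, smul_smul]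
    congr 1
    have hkne : ((k : ℕ) : F) ≠ 0 := Nat.cast_ne_zero.2 (by omega)
    field_simp
    rw [div_eq_iff al_ne]
    ring
  have main2 : ∑ i ∈ I, ∑ j ∈ I,
      (((((i : ℕ) + j : ℕ) : F) * al) • (pvar i * pvar j * pdiff (i + j) (Qrow n))
        + ((((i * j : ℕ) : F) * al ^ 2) • (pvar (i + j) * pdiff i (pdiff j (Qrow n)))))
      = (∑ s ∈ I, (((n - s : ℕ) : F) * al) • g s) + ∑ s ∈ I, (((s - 1 : ℕ) : F)) • g s := by
    calc ∑ i ∈ I, ∑ j ∈ I,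
        (((((i : ℕ) + j : ℕ) : F) * al) • (pvar i * pvar j * pdiff (i + j) (Qrow n))
          + ((((i * j : ℕ) : F) * al ^ 2) • (pvar (i + j) * pdiff i (pdiff j (Qrow n)))))
        = ∑ i ∈ I, ∑ j ∈ I,
            ((if i + j ≤ n then pvar i * (pvar j * Qrow (n - (i + j))) else 0)
              + (if i + j ≤ n then pvar (i + j) * Qrow (n - (i + j)) else 0)) :=
          Finset.sum_congr rfl (fun i hi => Finset.sum_congr rfl (fun j hj => hbr i hi j hj))
      _ = ∑ i ∈ I, ((∑ j ∈ I, if i + j ≤ n then pvar i * (pvar j * Qrow (n - (i + j))) else 0)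
              + ∑ j ∈ I, if i + j ≤ n then pvar (i + j) * Qrow (n - (i + j)) else 0) :=
          Finset.sum_congr rfl (fun i _ => Finset.sum_add_distrib)
      _ = (∑ i ∈ I, ∑ j ∈ I, if i + j ≤ n then pvar i * (pvar j * Qrow (n - (i + j))) else 0)
              + ∑ i ∈ I, ∑ j ∈ I, if i + j ≤ n then pvar (i + j) * Qrow (n - (i + j)) else 0 :=
          Finset.sum_add_distrib
      _ = _ := by rw [S1, S2]
  rw [main2, S3, ← Finset.sum_add_distrib, ← Finset.sum_add_distrib]
  have combine : ∀ s ∈ I, (((n - s : ℕ) : F) * al) • g s + (((s - 1 : ℕ) : F)) • g s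
      + (((s : ℕ) : F) * (al - 1)) • g s = ((n : F) * al - 1) • g s := by
    intro s hs
    rw [hI, Finset.mem_Icc] at hs
    rw [← add_smul, ← add_smul]
    congr 1
    rw [Nat.cast_sub hs.2, Nat.cast_sub hs.1]
    push_cast
    ring
  rw [Finset.sum_congr rfl combine, ← Finset.smul_sum, keyB n, smul_smul]
  congr 1
  ring


/-- For every `n ≥ 1`, `D(α)·Q_n(α) = (α²n² − nα)·Q_n(α)`. -/
theorem statement0 (n : ℕ) (hn : 1 ≤ n) :
    Dop (Qrow n) = (al ^ 2 * (n : F) ^ 2 - (n : F) * al) • Qrow n := by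
  rw [Dop]
  exact statement0' n hn

end JackPaper
end

section
/- For every integer n ≥ 1, the power sum p_n expands in the basis {q_μ(α) : μ ⊢ n} as p_n = Σ_{μ ⊢ n} a_{n,μ} q_μ(α) with a_{n,μ} = nα·(−1)^{ℓ(μ)−1}·(ℓ(μ)−1)!/m(μ)!. -/
open scoped BigOperators Classical
open MvPolynomial

noncomputable section JackPaper

namespace JackAux
open Multiset Finset

instance : CharZero F :=
  charZero_of_injective_algebraMap (algebraMap ℚ (RatFunc ℚ)).injective

lemma al_ne_zero : al ≠ 0 := RatFunc.X_ne_zero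

lemma pProd_cons (a : ℕ) (m : Multiset ℕ) : pProd (a ::ₘ m) = pvar a * pProd m := by
  simp [pProd]

lemma qgen_cons (a : ℕ) (m : Multiset ℕ) : qgen (a ::ₘ m) = Qrow a * qgen m := by
  simp [qgen]

lemma mfact_pos (m : Multiset ℕ) : 0 < mfact m := by
  unfold mfact
  exact Finset.prod_pos fun _ _ => Nat.factorial_pos _

lemma mfact_erase (m : Multiset ℕ) (a : ℕ) (h : a ∈ m) :
    mfact m = m.count a * mfact (m.erase a) := by
  classical
  have hsub : (m.erase a).toFinset ⊆ m.toFinset := by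
    intro x hx
    simp only [Multiset.mem_toFinset] at hx ⊢
    exact Multiset.mem_of_mem_erase hx
  have ha : a ∈ m.toFinset := Multiset.mem_toFinset.2 h
  have hcnt : 1 ≤ m.count a := Multiset.one_le_count_iff_mem.2 h
  unfold mfact
  have h1 : ∏ k ∈ (m.erase a).toFinset, ((m.erase a).count k).factorial
      = ∏ k ∈ m.toFinset, ((m.erase a).count k).factorial := by
    refine Finset.prod_subset hsub ?_
    intro x hx hx'
    have : (m.erase a).count x = 0 := by
      simp only [Multiset.mem_toFinset] at hx'
      exact Multiset.count_eq_zero.2 hx'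
    simp [this]
  rw [h1, ← Finset.mul_prod_erase _ _ ha, ← Finset.mul_prod_erase _ _ ha, ← mul_assoc]
  congr 1
  · rw [Multiset.count_erase_self]
    have := Nat.mul_factorial_pred (Nat.pos_iff_ne_zero.1 (Nat.lt_of_lt_of_le Nat.zero_lt_one hcnt))
    omega
  · refine Finset.prod_congr rfl fun x hx => ?_
    rw [Multiset.count_erase_of_ne (by simp at hx; exact hx.1)]

lemma zee_pos (m : Multiset ℕ) (h : ∀ i ∈ m, 0 < i) : 0 < zee m :=
  Nat.mul_pos (Multiset.prod_pos h) (mfact_pos m)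

lemma zee_erase (m : Multiset ℕ) (a : ℕ) (h : a ∈ m) :
    zee m = (a * m.count a) * zee (m.erase a) := by
  unfold zee
  rw [mfact_erase m a h, ← Multiset.prod_erase h]
  ring

lemma Qrow_zero : Qrow 0 = 1 := by
  rw [Qrow, QrowT]
  rw [Finset.sum_eq_single (default : Nat.Partition 0)]
  · simp [len, zee, mfact, pProd]
  · intro b _ hb; exact absurd (Subsingleton.elim b default) hb
  · simp

lemma mfact_single (a : ℕ) : mfact {a} = 1 := by
  simp [mfact]

/-- the one-part partition `(n)` -/
def topP (n : ℕ) (hn : 1 ≤ n) : n.Partition :=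
  ⟨{n}, by intro i hi; simp at hi; omega, by simp⟩

def consP {n : ℕ} (k : ℕ) (hk1 : 1 ≤ k) (hkn : k ≤ n) (ν : (n - k).Partition) : n.Partition :=
  ⟨k ::ₘ ν.parts, by
    intro i hi
    rcases Multiset.mem_cons.1 hi with rfl | hi
    · exact hk1
    · exact ν.parts_pos hi, by
    rw [Multiset.sum_cons, ν.parts_sum]; omega⟩

def eraseP {n : ℕ} (l : n.Partition) (j : ℕ) (hj : j ∈ l.parts) : (n - j).Partition :=
  ⟨l.parts.erase j, fun hi => l.parts_pos (Multiset.mem_of_mem_erase hi), by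
    have h1 := Multiset.sum_erase hj
    rw [l.parts_sum] at h1
    omega⟩

lemma part_le {n : ℕ} (l : n.Partition) {j : ℕ} (hj : j ∈ l.parts) : j ≤ n :=
  l.parts_sum ▸ Multiset.le_sum_of_mem hj

lemma sigma_part_ext {k k' : ℕ} {μ : k.Partition} {μ' : k'.Partition} (h : k = k')
    (hp : μ.parts = μ'.parts) : (⟨k, μ⟩ : (m : ℕ) × m.Partition) = ⟨k', μ'⟩ := by
  subst h
  exact congrArg _ (Nat.Partition.ext hp)

lemma sigma_part_ext' {n k k' : ℕ} {μ : (n - k).Partition} {μ' : (n - k').Partition}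
    (h : k = k') (hp : μ.parts = μ'.parts) :
    (⟨k, μ⟩ : (m : ℕ) × (n - m).Partition) = ⟨k', μ'⟩ := by
  subst h
  exact congrArg _ (Nat.Partition.ext hp)

lemma sigma_part_nat_ext {n : ℕ} {l l' : n.Partition} {j j' : ℕ} (h : l.parts = l'.parts)
    (hj : j = j') : (⟨l, j⟩ : (_ : n.Partition) × ℕ) = ⟨l', j'⟩ := by
  cases Nat.Partition.ext h
  cases hj
  rfl

lemma card_pos_of_part {n : ℕ} (hn : 1 ≤ n) (l : n.Partition) : 1 ≤ Multiset.card l.parts := by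
  by_contra h
  have h0 : l.parts = 0 := Multiset.card_eq_zero.1 (by omega)
  have h2 := l.parts_sum
  rw [h0] at h2
  simp at h2
  omega

lemma sum_count_mul {m : Multiset ℕ} : ∑ a ∈ m.toFinset, a * m.count a = m.sum := by
  conv_rhs => rw [← Multiset.toFinset_sum_count_nsmul_eq m]
  rw [Multiset.sum_sum]
  refine Finset.sum_congr rfl fun x _ => ?_
  simp [Multiset.sum_nsmul, mul_comm]



lemma cast_zee_erase (l : Multiset ℕ) (hpos : ∀ i ∈ l, 0 < i) {j : ℕ} (hj : j ∈ l) :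
    ((zee (l.erase j) : F))⁻¹ = ((j * l.count j : ℕ) : F) * ((zee l : F))⁻¹ := by
  have h1 : (zee l : F) = ((j * l.count j : ℕ) : F) * ((zee (l.erase j) : F)) := by
    exact_mod_cast congrArg (fun x : ℕ => (x : F)) (zee_erase l j hj)
  have hjc : ((j * l.count j : ℕ) : F) ≠ 0 := by
    have hj0 : 0 < j := hpos j hj
    have hc : 0 < l.count j := Multiset.count_pos.2 hj
    exact_mod_cast Nat.cast_ne_zero.2 (Nat.mul_pos hj0 hc).ne'
  rw [h1, mul_inv, ← mul_assoc, mul_inv_cancel₀ hjc, one_mul]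

lemma newton (n : ℕ) (hn : 1 ≤ n) :
    ((n : F) * al) • Qrow n = ∑ k ∈ Finset.Icc 1 n, pvar k * Qrow (n - k) := by
  classical
  have hRHS : ∑ k ∈ Finset.Icc 1 n, pvar k * Qrow (n - k)
      = ∑ p ∈ (Finset.Icc 1 n).sigma (fun k => (Finset.univ : Finset (n - k).Partition)),
          ((al ^ len p.2)⁻¹ * ((zee p.2.parts : F))⁻¹) • (pvar p.1 * pProd p.2.parts) := by
    rw [Finset.sum_sigma]
    refine Finset.sum_congr rfl fun k _ => ?_
    rw [Qrow, QrowT, Finset.mul_sum]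
    exact Finset.sum_congr rfl fun ν _ => by rw [mul_smul_comm]
  rw [hRHS]
  have key : ∑ p ∈ (Finset.Icc 1 n).sigma (fun k => (Finset.univ : Finset (n - k).Partition)),
          ((al ^ len p.2)⁻¹ * ((zee p.2.parts : F))⁻¹) • (pvar p.1 * pProd p.2.parts)
      = ∑ q ∈ (Finset.univ : Finset n.Partition).sigma (fun l => l.parts.toFinset),
          ((al ^ (len q.1 - 1))⁻¹ * ((zee (q.1.parts.erase q.2) : F))⁻¹) • pProd q.1.parts := by
    refine Finset.sum_bij'
      (fun p hp => (⟨consP p.1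
          (by simp only [Finset.mem_sigma, Finset.mem_Icc] at hp; exact hp.1.1)
          (by simp only [Finset.mem_sigma, Finset.mem_Icc] at hp; exact hp.1.2) p.2, p.1⟩ :
        (l : n.Partition) × ℕ))
      (fun q hq => (⟨q.2, eraseP q.1 q.2
          (by simp only [Finset.mem_sigma, Multiset.mem_toFinset] at hq; exact hq.2)⟩ :
        (k : ℕ) × (n - k).Partition))
      ?_ ?_ ?_ ?_ ?_
    · intro p hp
      simp only [Finset.mem_sigma, Finset.mem_univ, Multiset.mem_toFinset, true_and]
      exact Multiset.mem_cons_self _ _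
    · intro q hq
      simp only [Finset.mem_sigma, Multiset.mem_toFinset] at hq
      simp only [Finset.mem_sigma, Finset.mem_univ, Finset.mem_Icc, and_true]
      exact ⟨q.1.parts_pos hq.2, part_le q.1 hq.2⟩
    · intro p hp
      obtain ⟨k, ν⟩ := p
      dsimp only
      refine sigma_part_ext' rfl ?_
      exact Multiset.erase_cons_head _ _
    · intro q hq
      obtain ⟨lq, jq⟩ := q
      simp only [Finset.mem_sigma, Multiset.mem_toFinset] at hq
      dsimp only
      refine sigma_part_nat_ext ?_ rfl
      exact Multiset.cons_erase hq.2
    · intro p hp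
      simp [consP, len, pProd_cons, Multiset.erase_cons_head]
  rw [key, Finset.sum_sigma]
  rw [Qrow, QrowT, Finset.smul_sum]
  refine Finset.sum_congr rfl fun l _ => ?_
  dsimp only
  rw [← Finset.sum_smul, smul_smul]
  congr 1
  -- coefficient identity
  have hpos : ∀ i ∈ l.parts, 0 < i := fun i hi => l.parts_pos hi
  have hz : ((zee l.parts : F)) ≠ 0 := Nat.cast_ne_zero.2 (zee_pos l.parts hpos).ne'
  have step : ∀ j ∈ l.parts.toFinset,
      (al ^ (len l - 1))⁻¹ * ((zee (l.parts.erase j) : F))⁻¹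
        = ((j * l.parts.count j : ℕ) : F) * ((al ^ (len l - 1))⁻¹ * ((zee l.parts : F))⁻¹) := by
    intro j hj
    rw [cast_zee_erase l.parts hpos (Multiset.mem_toFinset.1 hj)]
    ring
  rw [Finset.sum_congr rfl step, ← Finset.sum_mul]
  have hsum : ∑ j ∈ l.parts.toFinset, ((j * l.parts.count j : ℕ) : F) = (n : F) := by
    rw [← Nat.cast_sum]
    norm_cast
    rw [sum_count_mul, l.parts_sum]
  rw [hsum]
  have hl1 : 1 ≤ len l := card_pos_of_part hn l
  have hpow : al ^ len l = al ^ (len l - 1) * al := by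
    rw [← pow_succ]
    congr 1
    omega
  rw [hpow]
  field_simp [al_ne_zero]


def Acoef (k : ℕ) (m : Multiset ℕ) : F :=
  (k : F) * al * (-1 : F) ^ (Multiset.card m - 1) * ((Multiset.card m - 1).factorial : F) /
    (mfact m : F)

def consP2 {n : ℕ} (j : ℕ) (hj : 1 ≤ j) {k : ℕ} (hk : j + k = n) (μ : k.Partition) :
    n.Partition :=
  ⟨j ::ₘ μ.parts, by
    intro i hi
    rcases Multiset.mem_cons.1 hi with rfl | hi
    · exact hj
    · exact μ.parts_pos hi, by
    rw [Multiset.sum_cons, μ.parts_sum]; omega⟩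

lemma qgen_single (a : ℕ) : qgen {a} = Qrow a := by
  simp [qgen]

lemma pvar_eq (n : ℕ) (hn : 1 ≤ n) :
    pvar n = ((n : F) * al) • Qrow n - ∑ k ∈ Finset.Icc 1 (n - 1), pvar k * Qrow (n - k) := by
  obtain ⟨m, rfl⟩ : ∃ m, n = m + 1 := ⟨n - 1, by omega⟩
  have h := newton (m + 1) hn
  rw [Finset.sum_Icc_succ_top (by omega : 1 ≤ m + 1)] at h
  simp only [Nat.sub_self, Qrow_zero, mul_one, Nat.add_sub_cancel] at h ⊢
  rw [h]
  ring

lemma statement1' (n : ℕ) (hn : 1 ≤ n) :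
    pvar n = ∑ μ : n.Partition, Acoef n μ.parts • qgen μ.parts := by
  induction n using Nat.strong_induction_on with
  | _ n ih =>
  rw [pvar_eq n hn]
  -- substitute the induction hypothesis
  have hsub : ∑ k ∈ Finset.Icc 1 (n - 1), pvar k * Qrow (n - k)
      = ∑ p ∈ (Finset.Icc 1 (n - 1)).sigma (fun k => (Finset.univ : Finset k.Partition)),
          Acoef p.1 p.2.parts • qgen ((n - p.1) ::ₘ p.2.parts) := by
    rw [Finset.sum_sigma]
    refine Finset.sum_congr rfl fun k hk => ?_
    simp only [Finset.mem_Icc] at hk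
    rw [ih k (by omega) hk.1, Finset.sum_mul]
    refine Finset.sum_congr rfl fun μ _ => ?_
    rw [smul_mul_assoc, mul_comm (qgen μ.parts), ← qgen_cons]
  rw [hsub]
  -- reindex the double sum by (partition of n, distinguished part < n)
  have key : ∑ p ∈ (Finset.Icc 1 (n - 1)).sigma (fun k => (Finset.univ : Finset k.Partition)),
          Acoef p.1 p.2.parts • qgen ((n - p.1) ::ₘ p.2.parts)
      = ∑ q ∈ (Finset.univ : Finset n.Partition).sigma
            (fun l => l.parts.toFinset.filter (· < n)),
          Acoef (n - q.2) (q.1.parts.erase q.2) • qgen q.1.parts := by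
    refine Finset.sum_bij'
      (fun p hp => (⟨consP2 (n - p.1)
          (by simp only [Finset.mem_sigma, Finset.mem_Icc] at hp; omega)
          (by simp only [Finset.mem_sigma, Finset.mem_Icc] at hp; omega) p.2, n - p.1⟩ :
        (l : n.Partition) × ℕ))
      (fun q hq => (⟨n - q.2, eraseP q.1 q.2
          (by simp only [Finset.mem_sigma, Finset.mem_filter, Multiset.mem_toFinset] at hq
              exact hq.2.1)⟩ : (k : ℕ) × k.Partition))
      ?_ ?_ ?_ ?_ ?_
    · intro p hp
      simp only [Finset.mem_sigma, Finset.mem_Icc] at hp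
      simp only [Finset.mem_sigma, Finset.mem_univ, Finset.mem_filter, Multiset.mem_toFinset,
        true_and]
      exact ⟨Multiset.mem_cons_self _ _, by omega⟩
    · intro q hq
      simp only [Finset.mem_sigma, Finset.mem_filter, Multiset.mem_toFinset] at hq
      have hjn : q.2 ≤ n := part_le q.1 hq.2.1
      have hj1 : 1 ≤ q.2 := q.1.parts_pos hq.2.1
      have h22 : q.2 < n := hq.2.2
      simp only [Finset.mem_sigma, Finset.mem_Icc, Finset.mem_univ, and_true]
      omega
    · intro p hp
      obtain ⟨k, μ⟩ := p
      simp only [Finset.mem_sigma, Finset.mem_Icc] at hp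
      dsimp only
      refine sigma_part_ext (by omega) ?_
      exact Multiset.erase_cons_head _ _
    · intro q hq
      obtain ⟨lq, jq⟩ := q
      simp only [Finset.mem_sigma, Finset.mem_filter, Multiset.mem_toFinset] at hq
      have hjn : jq ≤ n := part_le lq hq.2.1
      dsimp only
      refine sigma_part_nat_ext ?_ (by omega)
      show (n - (n - jq)) ::ₘ (lq.parts.erase jq) = lq.parts
      rw [show n - (n - jq) = jq by omega]
      exact Multiset.cons_erase hq.2.1
    · intro p hp
      obtain ⟨k, μ⟩ := p
      simp only [Finset.mem_sigma, Finset.mem_Icc] at hp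
      show Acoef k μ.parts • qgen ((n - k) ::ₘ μ.parts)
        = Acoef (n - (n - k)) (((n - k) ::ₘ μ.parts).erase (n - k)) • qgen ((n - k) ::ₘ μ.parts)
      rw [Multiset.erase_cons_head, show n - (n - k) = k by omega]
  rw [key, Finset.sum_sigma]
  -- rewrite the first term as a sum over all partitions
  have hfirst : ((n : F) * al) • Qrow n
      = ∑ l : n.Partition, (if l = topP n hn then (n : F) * al else 0) • qgen l.parts := by
    simp only [ite_smul, zero_smul]
    rw [Finset.sum_ite_eq' Finset.univ (topP n hn)
      (fun l => ((n : F) * al) • qgen l.parts)]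
    simp only [Finset.mem_univ, if_true]
    rw [show (topP n hn).parts = {n} from rfl, qgen_single]
  rw [hfirst, ← Finset.sum_sub_distrib]
  refine Finset.sum_congr rfl fun l _ => ?_
  dsimp only
  rw [← Finset.sum_smul, ← sub_smul]
  congr 1
  -- the coefficient identity for a fixed partition l
  by_cases hl : l = topP n hn
  · subst hl
    rw [if_pos rfl]
    have hfilt : ({n} : Multiset ℕ).toFinset.filter (· < n) = ∅ := by
      ext x
      simp only [Multiset.toFinset_singleton, Finset.mem_filter, Finset.mem_singleton,
        Finset.notMem_empty, iff_false]
      rintro ⟨rfl, h⟩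
      omega
    rw [show (topP n hn).parts = {n} from rfl, hfilt]
    simp [Acoef, mfact_single]
  · rw [if_neg hl]
    have hpos : ∀ i ∈ l.parts, 0 < i := fun i hi => l.parts_pos hi
    have hl1 : 1 ≤ Multiset.card l.parts := card_pos_of_part hn l
    have hl2 : 2 ≤ Multiset.card l.parts := by
      by_contra h
      have h1 : Multiset.card l.parts = 1 := by omega
      obtain ⟨x, hx⟩ := Multiset.card_eq_one.1 h1
      have hxn : x = n := by
        have h2 := l.parts_sum
        rw [hx] at h2
        simpa using h2
      exact hl (Nat.Partition.ext (by rw [hx, hxn]; rfl))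
    obtain ⟨s, hs⟩ : ∃ s, Multiset.card l.parts = s + 2 := ⟨Multiset.card l.parts - 2, by omega⟩
    have hlt : ∀ j ∈ l.parts, j < n := by
      intro j hjm
      rcases lt_or_eq_of_le (part_le l hjm) with h | h
      · exact h
      · exfalso
        have hce := Multiset.cons_erase hjm
        have hsum0 : (l.parts.erase j).sum = 0 := by
          have h2 := congrArg Multiset.sum hce
          rw [Multiset.sum_cons, l.parts_sum] at h2
          omega
        have hz : l.parts.erase j = 0 := by
          rw [Multiset.eq_zero_iff_forall_notMem]
          intro x hx
          have h3 : 0 < x := l.parts_pos (Multiset.mem_of_mem_erase hx)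
          have h4 : x ≤ (l.parts.erase j).sum := Multiset.le_sum_of_mem hx
          omega
        have h5 := congrArg Multiset.card hce
        rw [Multiset.card_cons, hz] at h5
        simp at h5
        omega
    have hfilt : l.parts.toFinset.filter (· < n) = l.parts.toFinset := by
      refine Finset.filter_true_of_mem fun j hj => ?_
      exact hlt j (Multiset.mem_toFinset.1 hj)
    rw [hfilt]
    have hM : ((mfact l.parts : F)) ≠ 0 := Nat.cast_ne_zero.2 (mfact_pos _).ne'
    have hterm : ∀ j ∈ l.parts.toFinset, Acoef (n - j) (l.parts.erase j)
        = ((n : F) - (j : F)) * (l.parts.count j : F) *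
            (al * (-1 : F) ^ s * (s.factorial : F) / (mfact l.parts : F)) := by
      intro j hj
      have hjm := Multiset.mem_toFinset.1 hj
      have hjn : j < n := hlt j hjm
      have hcard : Multiset.card (l.parts.erase j) - 1 = s := by
        rw [Multiset.card_erase_of_mem hjm, hs]
        rfl
      have hmf : (mfact l.parts : F) = (l.parts.count j : F) * (mfact (l.parts.erase j) : F) := by
        exact_mod_cast congrArg (fun x : ℕ => (x : F)) (mfact_erase _ j hjm)
      have hcnt : ((l.parts.count j : F)) ≠ 0 :=
        Nat.cast_ne_zero.2 (Multiset.count_pos.2 hjm).ne'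
      have hmf' : ((mfact (l.parts.erase j) : F)) ≠ 0 := Nat.cast_ne_zero.2 (mfact_pos _).ne'
      rw [Acoef, hcard, Nat.cast_sub hjn.le, hmf]
      field_simp
    rw [Finset.sum_congr rfl hterm, ← Finset.sum_mul]
    have h1 : ∑ j ∈ l.parts.toFinset, ((l.parts.count j : ℕ) : F) = (s : F) + 2 := by
      rw [← Nat.cast_sum, Multiset.toFinset_sum_count_eq, hs]
      push_cast
      ring
    have h2 : ∑ j ∈ l.parts.toFinset, (j : F) * ((l.parts.count j : ℕ) : F) = (n : F) := by
      have h3 : ∑ j ∈ l.parts.toFinset, ((j * l.parts.count j : ℕ) : F) = ((l.parts.sum : ℕ) : F) := by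
        rw [← Nat.cast_sum, sum_count_mul]
      rw [l.parts_sum] at h3
      rw [← h3]
      push_cast
      ring_nf
    have hsum1 : ∑ j ∈ l.parts.toFinset, ((n : F) - (j : F)) * (l.parts.count j : F)
        = (n : F) * ((s : F) + 1) := by
      simp only [sub_mul]
      rw [Finset.sum_sub_distrib, ← Finset.mul_sum, h1, h2]
      ring
    rw [hsum1, Acoef, hs]
    rw [show s + 2 - 1 = s + 1 from rfl, Nat.factorial_succ, pow_succ]
    push_cast
    field_simp
    ring

end JackAux

/-- For `n ≥ 1`,
`p_n = Σ_{μ ⊢ n} nα·(−1)^{ℓ(μ)−1}·(ℓ(μ)−1)!/m(μ)! · q_μ(α)`. -/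
theorem statement1 (n : ℕ) (hn : 1 ≤ n) :
    pvar n = ∑ μ : n.Partition,
      ((n : F) * al * (-1 : F) ^ (len μ - 1) * ((len μ - 1).factorial : F) /
        (mfact μ.parts : F)) • qgen μ.parts := by
  exact JackAux.statement1' n hn

end JackPaper
end
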